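/- Let F(x,t) = Σ x^(m_n) t^(n + m_n), the sum ranging over all Ferrers diagrams (m_1, …, m_n), regarded as a formal power series in x and t over ℚ. Then (1 − t − x·t) · F(x,t) = x·t². Equivalently, for all integers p ≥ 2 and 1 ≤ m ≤ p − 1, the number of Ferrers diagrams with half-perimeter p and top row of width m is the binomial coefficient C(p−2, m−1). -/

import Mathlib

/-- A Ferrers diagram, encoded as its (nonempty) list of row lengths, bottom row first:
positive entries, weakly increasing. -/
def IsFerrers (l : List ℕ) : Prop :=
  l ≠ [] ∧ l.Pairwise (· ≤ ·) ∧ ∀ x ∈ l, 0 < x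

/-- The width of the top row, `m_n`. -/
def topWidth (l : List ℕ) : ℕ := l.getLastD 0

/-- The half-perimeter of a Ferrers diagram: number of rows plus width of the top row. -/
def halfPerim (l : List ℕ) : ℕ := l.length + topWidth l

/-- The generating function `F(x,t) = Σ x^(m_n) t^(n+m_n)` over all Ferrers diagrams,
as a formal power series in the two variables `x` (index 0) and `t` (index 1): the
coefficient of `x^a t^p` is the number of Ferrers diagrams with top width `a` and
half-perimeter `p`. -/
noncomputable def F : MvPowerSeries (Fin 2) ℚ := fun e =>
  (Nat.card {l : List ℕ // IsFerrers l ∧ topWidth l = e 0 ∧ halfPerim l = e 1} : ℚ)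

private lemma topWidth_getLast (l : List ℕ) (h : l ≠ []) : topWidth l = l.getLast h := by
  unfold topWidth
  rw [List.getLastD_eq_getLast?, List.getLast?_eq_getLast h]
  rfl

private lemma dropLast_append_topWidth (l : List ℕ) (h : l ≠ []) :
    l.dropLast ++ [topWidth l] = l := by
  rw [topWidth_getLast l h]; exact List.dropLast_append_getLast h

private lemma map_val_pmap_mk {m : ℕ} (l : List ℕ) (hb : ∀ x ∈ l, x < m) :
    (l.pmap (fun x h => (⟨x, h⟩ : Fin m)) hb).map Fin.val = l := by
  induction l with
  | nil => rfl
  | cons a t ih => simp_all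

private lemma pmap_mk_map_val {m : ℕ} (l : List (Fin m)) (H : ∀ x ∈ l.map Fin.val, x < m) :
    List.pmap (fun x h => (⟨x, h⟩ : Fin m)) (l.map Fin.val) H = l := by
  induction l with
  | nil => rfl
  | cons a t ih => simp_all

/-- sorted bounded lists of length n ≃ Sym (Fin m) n -/
noncomputable def symEquiv (m n : ℕ) :
    {l : List ℕ // l.Pairwise (· ≤ ·) ∧ (∀ x ∈ l, x < m) ∧ l.length = n} ≃ Sym (Fin m) n where
  toFun := fun l => ⟨(l.1.pmap (fun x h => (⟨x, h⟩ : Fin m)) l.2.2.1 : List (Fin m)), by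
    simp [l.2.2.2]⟩
  invFun := fun s => ⟨(Multiset.sort s.1 (· ≤ ·)).map Fin.val, by
    refine ⟨?_, fun x hx => ?_, ?_⟩
    · exact List.Pairwise.map Fin.val (fun a b h => h)
        (Multiset.pairwise_sort (α := Fin m) s.1 (· ≤ ·))
    · obtain ⟨a, _, rfl⟩ := List.mem_map.mp hx; exact a.2
    · simp [s.2]⟩
  left_inv := by
    rintro ⟨l, hs, hb, hn⟩
    apply Subtype.ext
    have hps : (l.pmap (fun x h => (⟨x, h⟩ : Fin m)) hb).Pairwise (· ≤ ·) := by
      rw [List.pairwise_pmap hb]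
      exact hs.imp_of_mem (by intro a b ha hb' h hx hy; exact h)
    have hse : Multiset.sort
          ((l.pmap (fun x h => (⟨x, h⟩ : Fin m)) hb : List (Fin m)) : Multiset (Fin m)) (· ≤ ·)
        = l.pmap (fun x h => (⟨x, h⟩ : Fin m)) hb := by
      apply List.Perm.eq_of_pairwise' (Multiset.pairwise_sort _ _) hps
      exact Multiset.coe_eq_coe.mp (Multiset.sort_eq _ _)
    show (Multiset.sort _ (· ≤ ·)).map Fin.val = l
    rw [hse, map_val_pmap_mk]
  right_inv := by
    rintro ⟨s, hs⟩
    apply Subtype.ext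
    show ((List.pmap _ ((Multiset.sort s (· ≤ ·)).map Fin.val) _ : List (Fin m)) : Multiset (Fin m)) = s
    rw [pmap_mk_map_val]
    exact Multiset.sort_eq _ _

def ferrersEquiv (m n : ℕ) (hm : 1 ≤ m) :
    {l : List ℕ // IsFerrers l ∧ topWidth l = m ∧ halfPerim l = m + n + 1} ≃
    {l : List ℕ // l.Pairwise (· ≤ ·) ∧ (∀ x ∈ l, x < m) ∧ l.length = n} where
  toFun := fun L => ⟨L.1.dropLast.map (· - 1), by
    obtain ⟨⟨hne, hs, hpos⟩, htw, hhp⟩ := L.2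
    have hdec := dropLast_append_topWidth L.1 hne
    rw [htw] at hdec
    have hs2 : List.Pairwise (· ≤ ·) (L.1.dropLast ++ [m]) := by
      have hs3 := hs; rw [← hdec] at hs3; exact hs3
    have hle : ∀ x ∈ L.1.dropLast, x ≤ m := by
      intro x hx
      exact (List.pairwise_append.mp hs2).2.2 x hx m (List.mem_singleton_self m)
    refine ⟨?_, fun x hx => ?_, ?_⟩
    · exact List.Pairwise.map _ (fun a b h => Nat.sub_le_sub_right h 1)
        (hs.sublist (List.dropLast_sublist L.1))
    · obtain ⟨a, ha, rfl⟩ := List.mem_map.mp hx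
      have h1 : 0 < a := hpos a (List.mem_of_mem_dropLast ha)
      have h2 : a ≤ m := hle a ha
      omega
    · have hlen : L.1.length = n + 1 := by
        have := hhp; unfold halfPerim at this; rw [htw] at this; omega
      simp [hlen]⟩
  invFun := fun L => ⟨L.1.map (· + 1) ++ [m], by
    obtain ⟨hs, hb, hn⟩ := L.2
    refine ⟨⟨by simp, ?_, ?_⟩, ?_, ?_⟩
    · refine List.pairwise_append.mpr ⟨?_, List.pairwise_singleton _ _, ?_⟩
      · exact List.Pairwise.map _ (fun a b h => Nat.add_le_add_right h 1) hs
      · intro a ha b hb'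
        rw [List.mem_singleton] at hb'; subst hb'
        obtain ⟨x, hx, rfl⟩ := List.mem_map.mp ha
        exact hb x hx
    · intro x hx
      rcases List.mem_append.mp hx with h | h
      · obtain ⟨a, _, rfl⟩ := List.mem_map.mp h; omega
      · rw [List.mem_singleton] at h; omega
    · unfold topWidth; rw [List.getLastD_concat]
    · unfold halfPerim topWidth
      rw [List.getLastD_concat]
      simp [hn]; omega⟩
  left_inv := by
    rintro ⟨l, ⟨hne, hs, hpos⟩, htw, hhp⟩
    apply Subtype.ext
    show (l.dropLast.map (· - 1)).map (· + 1) ++ [m] = l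
    have hdec := dropLast_append_topWidth l hne
    rw [htw] at hdec
    rw [List.map_map]
    have hmap : l.dropLast.map ((· + 1) ∘ (· - 1)) = l.dropLast := by
      rw [List.map_congr_left (g := id), List.map_id]
      intro x hx
      have := hpos x (List.mem_of_mem_dropLast hx)
      simp; omega
    rw [hmap, hdec]
  right_inv := by
    rintro ⟨l, hs, hb, hn⟩
    apply Subtype.ext
    show ((l.map (· + 1) ++ [m]).dropLast).map (· - 1) = l
    rw [List.dropLast_concat, List.map_map]
    rw [List.map_congr_left (g := id), List.map_id]
    intro x hx; simp

lemma ferrers_count (a b : ℕ) :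
    Nat.card {l : List ℕ // IsFerrers l ∧ topWidth l = a ∧ halfPerim l = b}
      = if 1 ≤ a ∧ a + 1 ≤ b then (b - 2).choose (a - 1) else 0 := by
  split_ifs with h
  · obtain ⟨ha, hab⟩ := h
    obtain ⟨n, rfl⟩ : ∃ n, b = a + n + 1 := ⟨b - a - 1, by omega⟩
    rw [Nat.card_congr ((ferrersEquiv a n ha).trans (symEquiv a n)),
      Nat.card_eq_fintype_card, Sym.card_sym_eq_multichoose, Fintype.card_fin,
      Nat.multichoose_eq]
    have h1 : a + n - 1 = (a + n + 1) - 2 := by omega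
    rw [h1, ← Nat.choose_symm (by omega : a - 1 ≤ a + n + 1 - 2)]
    congr 1
    omega
  · have : IsEmpty {l : List ℕ // IsFerrers l ∧ topWidth l = a ∧ halfPerim l = b} := by
      constructor
      rintro ⟨l, ⟨hne, hs, hpos⟩, htw, hhp⟩
      have hgl := topWidth_getLast l hne
      rw [htw] at hgl
      have h1 : 0 < a := hgl ▸ hpos _ (List.getLast_mem hne)
      have h2 : 1 ≤ l.length := List.length_pos_iff.mpr hne
      unfold halfPerim at hhp
      omega
    simp [Nat.card_of_isEmpty]

private def g (a b : ℕ) : ℕ := if 1 ≤ a ∧ a + 1 ≤ b then (b - 2).choose (a - 1) else 0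

private lemma key_nat (a b : ℕ) :
    g a b = (if 1 ≤ b then g a (b - 1) else 0)
      + (if 1 ≤ a ∧ 1 ≤ b then g (a - 1) (b - 1) else 0)
      + (if a = 1 ∧ b = 2 then 1 else 0) := by
  unfold g
  by_cases h1 : 1 ≤ a ∧ a + 1 ≤ b
  · obtain ⟨ha, hb⟩ := h1
    obtain ⟨a', rfl⟩ : ∃ a', a = a' + 1 := ⟨a - 1, by omega⟩
    obtain ⟨b', rfl⟩ : ∃ b', b = b' + 2 := ⟨b - 2, by omega⟩
    have hab : a' ≤ b' := by omega
    rw [if_pos ⟨by omega, by omega⟩, if_pos (by omega : (1:ℕ) ≤ b' + 2),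
      if_pos (by omega : 1 ≤ a' + 1 ∧ (1:ℕ) ≤ b' + 2)]
    simp only [show b' + 2 - 2 = b' from by omega, show a' + 1 - 1 = a' from by omega,
      show b' + 2 - 1 = b' + 1 from by omega, show b' + 1 - 2 = b' - 1 from by omega]
    split_ifs with h2 h3 h4 <;> try omega
    · obtain ⟨a'', rfl⟩ : ∃ a'', a' = a'' + 1 := ⟨a' - 1, by omega⟩
      obtain ⟨b'', rfl⟩ : ∃ b'', b' = b'' + 1 := ⟨b' - 1, by omega⟩
      simp only [show b'' + 1 - 1 = b'' from by omega, show a'' + 1 - 1 = a'' from by omega,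
        Nat.choose_succ_succ, Nat.succ_eq_add_one]
      omega
    · obtain rfl : a' = 0 := by omega
      simp
    · obtain rfl : a' = b' := by omega
      obtain ⟨a'', rfl⟩ : ∃ a'', a' = a'' + 1 := ⟨a' - 1, by omega⟩
      simp [show a'' + 1 - 1 = a'' from by omega]
    · obtain rfl : a' = 0 := by omega
      obtain rfl : b' = 0 := by omega
      simp
  · rw [if_neg h1]
    split_ifs <;> omega

theorem ferrers_gf :
    (1 - MvPowerSeries.X 1 - MvPowerSeries.X 0 * MvPowerSeries.X 1) * F
      = MvPowerSeries.X 0 * (MvPowerSeries.X 1 : MvPowerSeries (Fin 2) ℚ) ^ 2 ∧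
    ∀ p m : ℕ, 2 ≤ p → 1 ≤ m → m ≤ p - 1 →
      Nat.card {l : List ℕ // IsFerrers l ∧ halfPerim l = p ∧ topWidth l = m}
        = (p - 2).choose (m - 1) := by
  constructor
  · apply MvPowerSeries.ext
    intro e
    have hF : ∀ d : Fin 2 →₀ ℕ, MvPowerSeries.coeff d F = ((g (d 0) (d 1) : ℕ) : ℚ) := by
      intro d
      rw [MvPowerSeries.coeff_apply]
      show ((Nat.card _ : ℕ) : ℚ) = _
      norm_cast
      rw [ferrers_count]
      rfl
    have hX : ∀ s : Fin 2, (MvPowerSeries.X s : MvPowerSeries (Fin 2) ℚ)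
        = MvPowerSeries.monomial (Finsupp.single s 1) 1 := fun s => rfl
    rw [sub_mul, sub_mul, one_mul, map_sub, map_sub, MvPowerSeries.X_pow_eq, hX 0, hX 1,
      MvPowerSeries.monomial_mul_monomial, MvPowerSeries.monomial_mul_monomial, one_mul,
      MvPowerSeries.coeff_monomial_mul, MvPowerSeries.coeff_monomial_mul,
      MvPowerSeries.coeff_monomial, hF]
    have hc1 : (Finsupp.single 1 1 ≤ e) = (1 ≤ e 1) := propext Finsupp.single_le_iff
    have hc2 : (Finsupp.single 0 1 + Finsupp.single 1 1 ≤ e) = (1 ≤ e 0 ∧ 1 ≤ e 1) := by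
      apply propext
      simp [Finsupp.le_def, Fin.forall_fin_two, Finsupp.single_apply]
    have hc3 : (e = Finsupp.single 0 1 + Finsupp.single 1 2) = (e 0 = 1 ∧ e 1 = 2) := by
      apply propext
      rw [Finsupp.ext_iff, Fin.forall_fin_two]
      simp [Finsupp.single_apply]
    simp only [hF, hc1, hc2, hc3, Finsupp.coe_tsub, Pi.sub_apply, Finsupp.coe_add,
      Pi.add_apply, Finsupp.single_apply]
    norm_num
    have hk := key_nat (e 0) (e 1)
    split_ifs at hk ⊢ <;> (rw [hk]; push_cast; ring)
  · intro p m hp hm hmp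
    have h := ferrers_count m p
    rw [if_pos ⟨hm, by omega⟩] at h
    rw [← h]
    exact Nat.card_congr (Equiv.subtypeEquivRight (fun l => by tauto))
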